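/- arXiv:2406.05616 — 2 statements merged into one kernel-verified Lean document; each statement's English description precedes it below -/
import Mathlib

section
/- The square root of the Jensen–Shannon divergence satisfies the triangle inequality: for any three probability densities p, q, r on a measure space (Ω, μ), d_JS(p,r) ≤ d_JS(p,q) + d_JS(q,r). -/
open MeasureTheory

/-- A probability density on `(Ω, μ)`: nonnegative, measurable, integrating to 1. -/
def IsProbDensity {Ω : Type*} [MeasurableSpace Ω] (μ : Measure Ω) (p : Ω → ℝ) : Prop :=
  Measurable p ∧ (∀ x, 0 ≤ p x) ∧ ∫ x, p x ∂μ = 1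

/-- Kullback–Leibler divergence between densities. -/
noncomputable def KLdiv {Ω : Type*} [MeasurableSpace Ω] (μ : Measure Ω) (p q : Ω → ℝ) : ℝ :=
  ∫ x, p x * Real.log (p x / q x) ∂μ

/-- Jensen–Shannon divergence between densities. -/
noncomputable def JSdiv {Ω : Type*} [MeasurableSpace Ω] (μ : Measure Ω) (p q : Ω → ℝ) : ℝ :=
  (1 / 2) * (KLdiv μ p (fun x => (p x + q x) / 2) + KLdiv μ q (fun x => (p x + q x) / 2))

/-- Square root of the Jensen–Shannon divergence. -/
noncomputable def dJS {Ω : Type*} [MeasurableSpace Ω] (μ : Measure Ω) (p q : Ω → ℝ) : ℝ :=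
  Real.sqrt (JSdiv μ p q)

/-- Total variation distance between densities. -/
noncomputable def TVdist {Ω : Type*} [MeasurableSpace Ω] (μ : Measure Ω) (p q : Ω → ℝ) : ℝ :=
  (1 / 2) * ∫ x, |p x - q x| ∂μ

open Real Set intervalIntegral

set_option maxHeartbeats 1000000

lemma integrableOn_log_Ioc {c : ℝ} (hc : 0 < c) : IntegrableOn Real.log (Ioc 0 c) volume := by
  have hb : IntegrableOn (fun t : ℝ => 2 * (t ^ (-(1/2) : ℝ) + t ^ ((1/2) : ℝ))) (Ioc 0 c) volume := by
    have h1 : IntervalIntegrable (fun x : ℝ => x ^ (-(1/2) : ℝ)) volume 0 c :=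
      intervalIntegral.intervalIntegrable_rpow' (by norm_num)
    have h2 : IntervalIntegrable (fun x : ℝ => x ^ ((1/2) : ℝ)) volume 0 c :=
      intervalIntegral.intervalIntegrable_rpow' (by norm_num)
    have := ((h1.add h2).const_mul 2)
    rwa [intervalIntegrable_iff_integrableOn_Ioc_of_le hc.le] at this
  refine Integrable.mono' hb Real.measurable_log.aestronglyMeasurable ?_
  filter_upwards [ae_restrict_mem measurableSet_Ioc] with t ht
  obtain ⟨ht0, _⟩ := ht
  have h4 : (0:ℝ) < t ^ (-(1/2) : ℝ) := Real.rpow_pos_of_pos ht0 _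
  have h5 : (0:ℝ) < t ^ ((1/2) : ℝ) := Real.rpow_pos_of_pos ht0 _
  rw [Real.norm_eq_abs, abs_le]
  constructor
  · -- -(2*(...)) ≤ log t : equivalent to -log t ≤ 2 * t^(-1/2) + ...
    have := Real.log_le_sub_one_of_pos h4
    rw [Real.log_rpow ht0] at this
    nlinarith
  · have := Real.log_le_sub_one_of_pos h5
    rw [Real.log_rpow ht0] at this
    nlinarith

lemma integral_log_from_nonneg {a b : ℝ} (ha : 0 ≤ a) (hab : a ≤ b) :
    ∫ x in a..b, Real.log x = (b * Real.log b - b) - (a * Real.log a - a) := by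
  rcases eq_or_lt_of_le ha with rfl | ha'
  · rcases eq_or_lt_of_le hab with rfl | hb
    · simp
    · have hcont : ContinuousOn (fun t : ℝ => t * Real.log t - t) (Icc 0 b) := by
        have : (fun t : ℝ => t * Real.log t - t) = fun t => -Real.negMulLog t - t := by
          funext t; simp [Real.negMulLog]
        rw [this]
        exact (Real.continuous_negMulLog.neg.sub continuous_id).continuousOn
      have hderiv : ∀ x ∈ Ioo (0:ℝ) b,
          HasDerivWithinAt (fun t : ℝ => t * Real.log t - t) (Real.log x) (Ioi x) x := by
        intro x hx
        have h1 : HasDerivAt (fun t : ℝ => t * Real.log t - t)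
            (1 * Real.log x + x * x⁻¹ - 1) x :=
          ((hasDerivAt_id x).mul (Real.hasDerivAt_log hx.1.ne')).sub (hasDerivAt_id x)
        have : 1 * Real.log x + x * x⁻¹ - 1 = Real.log x := by
          rw [mul_inv_cancel₀ hx.1.ne']; ring
        rw [this] at h1
        exact h1.hasDerivWithinAt
      have hint : IntervalIntegrable Real.log volume 0 b := by
        rw [intervalIntegrable_iff_integrableOn_Ioc_of_le hb.le]
        exact integrableOn_log_Ioc hb
      have := intervalIntegral.integral_eq_sub_of_hasDeriv_right_of_le hb.le hcont hderiv hint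
      rw [this]
  · rw [integral_log]
    ring

lemma integral_exp_neg_interval {s α β : ℝ} (hs : s ≠ 0) :
    ∫ t in α..β, Real.exp (-(s * t)) = (Real.exp (-(s * α)) - Real.exp (-(s * β))) / s := by
  have h := intervalIntegral.integral_comp_mul_left (a := α) (b := β)
    (fun x => Real.exp (-x)) hs
  beta_reduce at h
  rw [h, intervalIntegral.integral_comp_neg (fun x => Real.exp x), integral_exp]
  simp [smul_eq_mul]
  ring

lemma lintegral_exp_neg_Ioi {r : ℝ} (hr : 0 < r) :
    ∫⁻ s in Ioi (0:ℝ), ENNReal.ofReal (Real.exp (-(r * s))) = ENNReal.ofReal r⁻¹ := by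
  have hint : IntegrableOn (fun s : ℝ => Real.exp (-(r * s))) (Ioi 0) volume := by
    have := exp_neg_integrableOn_Ioi 0 hr
    simpa [neg_mul] using this
  rw [← ofReal_integral_eq_lintegral_ofReal hint
      (Filter.Eventually.of_forall fun s => (Real.exp_pos _).le)]
  congr 1
  have h := integral_comp_mul_left_Ioi (fun x => Real.exp (-x)) 0 hr
  beta_reduce at h
  rw [h, mul_zero, integral_exp_neg_Ioi]
  simp

lemma sub_le_mul_log {x m : ℝ} (hx : 0 < x) (hm : 0 < m) :
    x - m ≤ x * Real.log (x / m) := by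
  have h := Real.log_le_sub_one_of_pos (div_pos hm hx)
  have hrw : Real.log (m / x) = - Real.log (x / m) := by
    rw [← Real.log_inv]; congr 1; field_simp
  rw [hrw] at h
  have := mul_le_mul_of_nonneg_left h hx.le
  rw [mul_neg] at this
  have h2 : x * (m / x - 1) = m - x := by field_simp
  nlinarith

lemma klpt_nonneg {a b : ℝ} (ha : 0 ≤ a) (hb : 0 ≤ b) :
    0 ≤ a * Real.log (a / ((a + b) / 2)) + b * Real.log (b / ((a + b) / 2)) := by
  rcases eq_or_lt_of_le ha with rfl | ha'
  · rcases eq_or_lt_of_le hb with rfl | hb'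
    · simp
    · have : (0 + b) / 2 = b / 2 := by ring_nf
      rw [this]
      have : b / (b / 2) = 2 := by field_simp
      simp [this]
      positivity
  · rcases eq_or_lt_of_le hb with rfl | hb'
    · have : (a + 0) / 2 = a / 2 := by ring_nf
      rw [this]
      have : a / (a / 2) = 2 := by field_simp
      simp [this]
      positivity
    · have hm : 0 < (a + b) / 2 := by linarith
      have h1 := sub_le_mul_log ha' hm
      have h2 := sub_le_mul_log hb' hm
      nlinarith

lemma klpt_abs_bound {a b : ℝ} (ha : 0 ≤ a) (hb : 0 ≤ b) :
    |a * Real.log (a / ((a + b) / 2))| ≤ Real.log 2 * a + b / 2 := by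
  have hl2 : (0:ℝ) ≤ Real.log 2 := Real.log_nonneg (by norm_num)
  rcases eq_or_lt_of_le ha with rfl | ha'
  · simp; positivity
  · have hm : 0 < (a + b) / 2 := by linarith
    rw [abs_le]
    constructor
    · have h1 := sub_le_mul_log ha' hm
      nlinarith
    · have h2 : Real.log (a / ((a + b) / 2)) ≤ Real.log 2 := by
        apply Real.log_le_log (by positivity)
        rw [div_le_iff₀ hm]; linarith
      nlinarith

lemma key_aux {α β : ℝ} (hα : 0 ≤ α) (hαβ : α ≤ β) :
    ∫⁻ s in Ioi (0:ℝ),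
        ENNReal.ofReal (((Real.exp (-(s * α)) - Real.exp (-(s * β))) / s) ^ 2)
      = ENNReal.ofReal ((2*α) * Real.log ((2*α)/(α+β)) + (2*β) * Real.log ((2*β)/(α+β))) := by
  rcases eq_or_lt_of_le (hα.trans hαβ) with hβ0 | hβ
  · -- β = 0, hence α = 0
    have hα0 : α = 0 := le_antisymm (hαβ.trans hβ0.symm.le) hα
    rw [← hβ0, hα0]
    simp
  -- β > 0
  set τ : Measure ℝ := volume.restrict (Ioc α β) with hτ
  have hEm : ∀ s : ℝ, Measurable fun t : ℝ => ENNReal.ofReal (Real.exp (-(s*t))) := by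
    intro s; fun_prop
  have hFm : Measurable fun q : (ℝ × ℝ) × ℝ =>
      ENNReal.ofReal (Real.exp (-(q.1.1 * (q.1.2 + q.2)))) := by fun_prop
  -- Step A+B: rewrite integrand for s > 0 as a double lintegral
  have stepA : ∫⁻ s in Ioi (0:ℝ),
        ENNReal.ofReal (((Real.exp (-(s * α)) - Real.exp (-(s * β))) / s) ^ 2)
      = ∫⁻ s in Ioi (0:ℝ), ∫⁻ t, ∫⁻ u, ENNReal.ofReal (Real.exp (-(s * (t + u)))) ∂τ ∂τ := by
    refine setLIntegral_congr_fun measurableSet_Ioi (fun s hs => ?_)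
    have hs0 : (0:ℝ) < s := hs
    have hval : ∫ t in α..β, Real.exp (-(s * t))
        = (Real.exp (-(s * α)) - Real.exp (-(s * β))) / s := integral_exp_neg_interval hs0.ne'
    have hg0 : 0 ≤ (Real.exp (-(s * α)) - Real.exp (-(s * β))) / s := by
      apply div_nonneg _ hs0.le
      have : -(s*β) ≤ -(s*α) := by nlinarith
      linarith [Real.exp_le_exp.2 this]
    have hint : IntegrableOn (fun t => Real.exp (-(s * t))) (Ioc α β) volume := by
      have : Continuous fun t : ℝ => Real.exp (-(s * t)) := by fun_prop
      exact this.integrableOn_Ioc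
    have hofReal : ENNReal.ofReal ((Real.exp (-(s * α)) - Real.exp (-(s * β))) / s)
        = ∫⁻ t, ENNReal.ofReal (Real.exp (-(s*t))) ∂τ := by
      rw [← hval, intervalIntegral.integral_of_le hαβ, hτ]
      exact ofReal_integral_eq_lintegral_ofReal hint
        (Filter.Eventually.of_forall fun t => (Real.exp_pos _).le)
    calc ENNReal.ofReal (((Real.exp (-(s * α)) - Real.exp (-(s * β))) / s) ^ 2)
        = ENNReal.ofReal (((Real.exp (-(s * α)) - Real.exp (-(s * β))) / s)
            * ((Real.exp (-(s * α)) - Real.exp (-(s * β))) / s)) := by rw [sq]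
      _ = ENNReal.ofReal ((Real.exp (-(s * α)) - Real.exp (-(s * β))) / s)
            * ENNReal.ofReal ((Real.exp (-(s * α)) - Real.exp (-(s * β))) / s) :=
          ENNReal.ofReal_mul hg0
      _ = (∫⁻ t, ENNReal.ofReal (Real.exp (-(s*t))) ∂τ)
            * (∫⁻ u, ENNReal.ofReal (Real.exp (-(s*u))) ∂τ) := by rw [hofReal]
      _ = ∫⁻ t, (ENNReal.ofReal (Real.exp (-(s*t)))
            * ∫⁻ u, ENNReal.ofReal (Real.exp (-(s*u))) ∂τ) ∂τ := by
          rw [lintegral_mul_const'' _ (hEm s).aemeasurable]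
      _ = ∫⁻ t, ∫⁻ u, ENNReal.ofReal (Real.exp (-(s * (t + u)))) ∂τ ∂τ := by
          refine lintegral_congr fun t => ?_
          rw [← lintegral_const_mul'' _ (hEm s).aemeasurable]
          refine lintegral_congr fun u => ?_
          rw [← ENNReal.ofReal_mul (Real.exp_pos _).le, ← Real.exp_add]
          congr 1
          ring
  rw [stepA]
  -- Step B: swap s outside-in
  have h1 : AEMeasurable (Function.uncurry fun s t =>
      ∫⁻ u, ENNReal.ofReal (Real.exp (-(s * (t + u)))) ∂τ) ((volume.restrict (Ioi (0:ℝ))).prod τ) :=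
    (Measurable.lintegral_prod_right' (f := fun q : (ℝ × ℝ) × ℝ =>
      ENNReal.ofReal (Real.exp (-(q.1.1 * (q.1.2 + q.2))))) hFm).aemeasurable
  have h2 : ∀ t : ℝ, AEMeasurable (Function.uncurry fun s u =>
      ENNReal.ofReal (Real.exp (-(s * (t + u))))) ((volume.restrict (Ioi (0:ℝ))).prod τ) := by
    intro t
    apply Measurable.aemeasurable
    fun_prop
  have swap1 : ∫⁻ s in Ioi (0:ℝ), ∫⁻ t, ∫⁻ u,
        ENNReal.ofReal (Real.exp (-(s * (t + u)))) ∂τ ∂τ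
      = ∫⁻ t, (∫⁻ u, (∫⁻ s in Ioi (0:ℝ),
        ENNReal.ofReal (Real.exp (-(s * (t + u))))) ∂τ) ∂τ :=
    calc ∫⁻ s in Ioi (0:ℝ), ∫⁻ t, ∫⁻ u,
          ENNReal.ofReal (Real.exp (-(s * (t + u)))) ∂τ ∂τ
        = ∫⁻ t, (∫⁻ s in Ioi (0:ℝ), ∫⁻ u,
          ENNReal.ofReal (Real.exp (-(s * (t + u)))) ∂τ) ∂τ := lintegral_lintegral_swap h1
      _ = ∫⁻ t, (∫⁻ u, (∫⁻ s in Ioi (0:ℝ),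
          ENNReal.ofReal (Real.exp (-(s * (t + u))))) ∂τ) ∂τ :=
          lintegral_congr fun t => lintegral_lintegral_swap (h2 t)
  rw [swap1]
  -- Step C: innermost s-integral
  have stepC : ∫⁻ t, (∫⁻ u, (∫⁻ s in Ioi (0:ℝ),
        ENNReal.ofReal (Real.exp (-(s * (t + u))))) ∂τ) ∂τ
      = ∫⁻ t, (∫⁻ u, ENNReal.ofReal ((t + u)⁻¹) ∂τ) ∂τ := by
    rw [hτ]
    refine setLIntegral_congr_fun measurableSet_Ioc (fun t ht => ?_)
    refine setLIntegral_congr_fun measurableSet_Ioc (fun u hu => ?_)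
    have htu : 0 < t + u := by
      have := ht.1; have := hu.1; linarith
    have : ∫⁻ s in Ioi (0:ℝ), ENNReal.ofReal (Real.exp (-(s * (t + u))))
        = ∫⁻ s in Ioi (0:ℝ), ENNReal.ofReal (Real.exp (-((t + u) * s))) :=
      lintegral_congr fun s => by rw [mul_comm]
    rw [this, lintegral_exp_neg_Ioi htu]
  rw [stepC, hτ]
  -- Step D: the u-integral
  have stepD : ∫⁻ t in Ioc α β, (∫⁻ u in Ioc α β, ENNReal.ofReal ((t + u)⁻¹))
      = ∫⁻ t in Ioc α β, ENNReal.ofReal (Real.log (β + t) - Real.log (α + t)) := by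
    refine setLIntegral_congr_fun measurableSet_Ioc (fun t ht => ?_)
    have ht0 : 0 < t := lt_of_le_of_lt hα ht.1
    have hcont : ContinuousOn (fun u : ℝ => (t + u)⁻¹) (Icc α β) := by
      refine ((continuous_add_left t).continuousOn).inv₀ fun u hu => ?_
      have h := hu.1
      exact ne_of_gt (by linarith)
    have hint : IntegrableOn (fun u : ℝ => (t + u)⁻¹) (Ioc α β) volume :=
      hcont.integrableOn_Icc.mono_set Ioc_subset_Icc_self
    have hnn : 0 ≤ᶠ[ae (volume.restrict (Ioc α β))] fun u : ℝ => (t + u)⁻¹ := by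
      filter_upwards [ae_restrict_mem measurableSet_Ioc] with u hu
      have h := hu.1
      exact inv_nonneg.2 (by linarith)
    rw [← ofReal_integral_eq_lintegral_ofReal hint hnn]
    congr 1
    have hca := intervalIntegral.integral_comp_add_left (a := α) (b := β)
      (fun x : ℝ => x⁻¹) t
    beta_reduce at hca
    have hne1 : (0:ℝ) < t + α := by positivity
    have hne2 : (0:ℝ) < t + β := by linarith
    rw [← intervalIntegral.integral_of_le hαβ, hca,
      integral_inv (notMem_uIcc_of_lt hne1 hne2),
      Real.log_div hne2.ne' hne1.ne', add_comm t β, add_comm t α]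
  rw [stepD]
  -- Step E: evaluate the t-integral
  have h₁ : IntegrableOn (fun t : ℝ => Real.log (β + t)) (Ioc α β) volume := by
    refine (ContinuousOn.integrableOn_Icc ?_).mono_set Ioc_subset_Icc_self
    refine ContinuousOn.log ((continuous_add_left β).continuousOn) fun t ht => ?_
    have h := ht.1
    exact ne_of_gt (by linarith)
  have h₂ : IntegrableOn (fun t : ℝ => Real.log (α + t)) (Ioc α β) volume := by
    rcases eq_or_lt_of_le hα with rfl | hα'
    · simp only [zero_add]
      exact integrableOn_log_Ioc hβ
    · refine (ContinuousOn.integrableOn_Icc ?_).mono_set Ioc_subset_Icc_self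
      refine ContinuousOn.log ((continuous_add_left α).continuousOn) fun t ht => ?_
      have h := ht.1
      exact ne_of_gt (by linarith)
  have hnn : 0 ≤ᶠ[ae (volume.restrict (Ioc α β))]
      fun t : ℝ => Real.log (β + t) - Real.log (α + t) := by
    filter_upwards [ae_restrict_mem measurableSet_Ioc] with t ht
    have h := ht.1
    have : Real.log (α + t) ≤ Real.log (β + t) :=
      Real.log_le_log (by linarith) (by linarith)
    simp only [Pi.zero_apply]
    linarith
  have hsub : Integrable (fun t : ℝ => Real.log (β + t) - Real.log (α + t))
      (volume.restrict (Ioc α β)) := h₁.sub h₂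
  rw [← ofReal_integral_eq_lintegral_ofReal hsub hnn]
  congr 1
  have hi₁ : IntervalIntegrable (fun t : ℝ => Real.log (β + t)) volume α β :=
    (intervalIntegrable_iff_integrableOn_Ioc_of_le hαβ).2 h₁
  have hi₂ : IntervalIntegrable (fun t : ℝ => Real.log (α + t)) volume α β :=
    (intervalIntegrable_iff_integrableOn_Ioc_of_le hαβ).2 h₂
  have e₁ : ∫ t in α..β, Real.log (β + t) =
      ((β + β) * Real.log (β + β) - (β + β)) - ((β + α) * Real.log (β + α) - (β + α)) := by
    rw [intervalIntegral.integral_comp_add_left Real.log β]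
    exact integral_log_from_nonneg (by linarith) (by linarith)
  have e₂ : ∫ t in α..β, Real.log (α + t) =
      ((α + β) * Real.log (α + β) - (α + β)) - ((α + α) * Real.log (α + α) - (α + α)) := by
    rw [intervalIntegral.integral_comp_add_left Real.log α]
    exact integral_log_from_nonneg (by linarith) (by linarith)
  rw [← intervalIntegral.integral_of_le hαβ, intervalIntegral.integral_sub hi₁ hi₂, e₁, e₂]
  -- Step F: algebra
  rw [show β + β = 2*β by ring, show β + α = α + β by ring, show α + α = 2*α by ring]
  rcases eq_or_lt_of_le hα with rfl | hα'
  · simp only [zero_add, mul_zero, zero_mul, Real.log_zero, sub_zero, add_zero]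
    rw [Real.log_div (by positivity) hβ.ne']
    ring
  · have hαβ' : (0:ℝ) < α + β := by linarith
    rw [Real.log_div (by positivity) hαβ'.ne', Real.log_div (by positivity) hαβ'.ne']
    ring

lemma key_lintegral {a b : ℝ} (ha : 0 ≤ a) (hb : 0 ≤ b) :
    ∫⁻ s in Ioi (0:ℝ),
        ENNReal.ofReal (((Real.exp (-(s * a / 2)) - Real.exp (-(s * b / 2))) / s) ^ 2)
      = ENNReal.ofReal (a * Real.log (a / ((a+b)/2)) + b * Real.log (b / ((a+b)/2))) := by
  rcases le_total a b with hab | hab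
  · have h := key_aux (show (0:ℝ) ≤ a/2 by linarith) (show a/2 ≤ b/2 by linarith)
    rw [show (2:ℝ)*(a/2) = a from by ring, show (2:ℝ)*(b/2) = b from by ring,
      show a/2 + b/2 = (a+b)/2 from by ring] at h
    have e : ∫⁻ s in Ioi (0:ℝ),
        ENNReal.ofReal (((Real.exp (-(s * a / 2)) - Real.exp (-(s * b / 2))) / s) ^ 2)
        = ∫⁻ s in Ioi (0:ℝ),
        ENNReal.ofReal (((Real.exp (-(s * (a/2))) - Real.exp (-(s * (b/2)))) / s) ^ 2) :=
      setLIntegral_congr_fun measurableSet_Ioi (fun s _ => by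
        rw [show s * (a/2) = s * a / 2 from by ring, show s * (b/2) = s * b / 2 from by ring])
    rw [e, h]
  · have h := key_aux (show (0:ℝ) ≤ b/2 by linarith) (show b/2 ≤ a/2 by linarith)
    rw [show (2:ℝ)*(a/2) = a from by ring, show (2:ℝ)*(b/2) = b from by ring,
      show b/2 + a/2 = (a+b)/2 from by ring] at h
    have e : ∫⁻ s in Ioi (0:ℝ),
        ENNReal.ofReal (((Real.exp (-(s * a / 2)) - Real.exp (-(s * b / 2))) / s) ^ 2)
        = ∫⁻ s in Ioi (0:ℝ),
        ENNReal.ofReal (((Real.exp (-(s * (b/2))) - Real.exp (-(s * (a/2)))) / s) ^ 2) :=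
      setLIntegral_congr_fun measurableSet_Ioi (fun s _ => by
        rw [show s * (b/2) = s * b / 2 from by ring, show s * (a/2) = s * a / 2 from by ring]
        congr 1
        ring)
    rw [e, h, add_comm]

lemma integrable_of_probDensity {Ω : Type*} [MeasurableSpace Ω] {μ : Measure Ω} {g : Ω → ℝ}
    (hg : IsProbDensity μ g) : Integrable g μ := by
  by_contra h
  obtain ⟨-, -, hi⟩ := hg
  rw [integral_undef h] at hi
  exact one_ne_zero hi.symm

set_option maxHeartbeats 1000000 in
lemma JS_repr {Ω : Type*} [MeasurableSpace Ω] (μ : Measure Ω) [SigmaFinite μ] (g h : Ω → ℝ)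
    (hg : IsProbDensity μ g) (hh : IsProbDensity μ h) :
    (∫⁻ z : Ω × ℝ, ENNReal.ofReal
        (((Real.exp (-(z.2 * g z.1 / 2)) - Real.exp (-(z.2 * h z.1 / 2))) / z.2) ^ 2)
        ∂(μ.prod (volume.restrict (Ioi 0)))) ≠ ⊤ ∧
    JSdiv μ g h = (1/2) * (∫⁻ z : Ω × ℝ, ENNReal.ofReal
        (((Real.exp (-(z.2 * g z.1 / 2)) - Real.exp (-(z.2 * h z.1 / 2))) / z.2) ^ 2)
        ∂(μ.prod (volume.restrict (Ioi 0)))).toReal := by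
  obtain ⟨hgm, hg0, hgi⟩ := hg
  obtain ⟨hhm, hh0, hhi⟩ := hh
  have hgInt : Integrable g μ := integrable_of_probDensity ⟨hgm, hg0, hgi⟩
  have hhInt : Integrable h μ := integrable_of_probDensity ⟨hhm, hh0, hhi⟩
  have hbInt : Integrable (fun x => Real.log 2 * g x + h x / 2) μ :=
    (hgInt.const_mul _).add (hhInt.div_const _)
  have hbInt' : Integrable (fun x => Real.log 2 * h x + g x / 2) μ :=
    (hhInt.const_mul _).add (hgInt.div_const _)
  have hIg : Integrable (fun x => g x * Real.log (g x / ((g x + h x)/2))) μ := by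
    refine Integrable.mono' hbInt ?_ (Filter.Eventually.of_forall fun x => ?_)
    · exact (hgm.mul (Real.measurable_log.comp
        (hgm.div ((hgm.add hhm).div_const 2)))).aestronglyMeasurable
    · exact klpt_abs_bound (hg0 x) (hh0 x)
  have hIh : Integrable (fun x => h x * Real.log (h x / ((g x + h x)/2))) μ := by
    refine Integrable.mono' hbInt' ?_ (Filter.Eventually.of_forall fun x => ?_)
    · exact (hhm.mul (Real.measurable_log.comp
        (hhm.div ((hgm.add hhm).div_const 2)))).aestronglyMeasurable
    · have := klpt_abs_bound (hh0 x) (hg0 x)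
      rwa [add_comm (h x) (g x)] at this
  have hF : Integrable (fun x => g x * Real.log (g x / ((g x + h x)/2))
      + h x * Real.log (h x / ((g x + h x)/2))) μ := hIg.add hIh
  have hFnn : ∀ x, 0 ≤ g x * Real.log (g x / ((g x + h x)/2))
      + h x * Real.log (h x / ((g x + h x)/2)) := fun x => klpt_nonneg (hg0 x) (hh0 x)
  have hUm : Measurable fun z : Ω × ℝ => ENNReal.ofReal
      (((Real.exp (-(z.2 * g z.1 / 2)) - Real.exp (-(z.2 * h z.1 / 2))) / z.2) ^ 2) := by
    have m1 : Measurable fun z : Ω × ℝ => Real.exp (-(z.2 * g z.1 / 2)) :=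
      Real.measurable_exp.comp ((measurable_snd.mul (hgm.comp measurable_fst)).div_const 2).neg
    have m2 : Measurable fun z : Ω × ℝ => Real.exp (-(z.2 * h z.1 / 2)) :=
      Real.measurable_exp.comp ((measurable_snd.mul (hhm.comp measurable_fst)).div_const 2).neg
    exact (((m1.sub m2).div measurable_snd).pow_const 2).ennreal_ofReal
  have hW : (∫⁻ z : Ω × ℝ, ENNReal.ofReal
        (((Real.exp (-(z.2 * g z.1 / 2)) - Real.exp (-(z.2 * h z.1 / 2))) / z.2) ^ 2)
        ∂(μ.prod (volume.restrict (Ioi 0))))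
      = ∫⁻ x, ENNReal.ofReal (g x * Real.log (g x / ((g x + h x)/2))
          + h x * Real.log (h x / ((g x + h x)/2))) ∂μ := by
    rw [lintegral_prod _ hUm.aemeasurable]
    refine lintegral_congr fun x => ?_
    simpa using key_lintegral (hg0 x) (hh0 x)
  constructor
  · rw [hW]
    exact (lt_of_le_of_lt (lintegral_ofReal_le_lintegral_enorm _) hF.2).ne
  · rw [hW]
    have := integral_eq_lintegral_of_nonneg_ae (μ := μ)
      (f := fun x => g x * Real.log (g x / ((g x + h x)/2))
          + h x * Real.log (h x / ((g x + h x)/2)))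
      (Filter.Eventually.of_forall hFnn) hF.1
    rw [← this]
    rw [JSdiv, KLdiv, KLdiv, ← integral_add hIg hIh]

/-- The square root of the Jensen–Shannon divergence satisfies the triangle inequality. -/
theorem dJS_triangle {Ω : Type*} [MeasurableSpace Ω] (μ : Measure Ω) [SigmaFinite μ]
    (p q r : Ω → ℝ) (hp : IsProbDensity μ p) (hq : IsProbDensity μ q)
    (hr : IsProbDensity μ r) :
    dJS μ p r ≤ dJS μ p q + dJS μ q r := by
  obtain ⟨hWpq_ne, hJpq⟩ := JS_repr μ p q hp hq
  obtain ⟨hWqr_ne, hJqr⟩ := JS_repr μ q r hq hr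
  obtain ⟨hWpr_ne, hJpr⟩ := JS_repr μ p r hp hr
  set M := μ.prod (volume.restrict (Ioi (0:ℝ))) with hM
  set Wpq := ∫⁻ z : Ω × ℝ, ENNReal.ofReal
      (((Real.exp (-(z.2 * p z.1 / 2)) - Real.exp (-(z.2 * q z.1 / 2))) / z.2) ^ 2) ∂M with hWpqdef
  set Wqr := ∫⁻ z : Ω × ℝ, ENNReal.ofReal
      (((Real.exp (-(z.2 * q z.1 / 2)) - Real.exp (-(z.2 * r z.1 / 2))) / z.2) ^ 2) ∂M with hWqrdef
  set Wpr := ∫⁻ z : Ω × ℝ, ENNReal.ofReal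
      (((Real.exp (-(z.2 * p z.1 / 2)) - Real.exp (-(z.2 * r z.1 / 2))) / z.2) ^ 2) ∂M with hWprdef
  have sqOfReal : ∀ x : ℝ, ENNReal.ofReal (x ^ 2) = ENNReal.ofReal |x| ^ (2:ℝ) := by
    intro x
    rw [← sq_abs x, ENNReal.ofReal_rpow_of_nonneg (abs_nonneg x) (by norm_num)]
    congr 1
    rw [← Real.rpow_natCast |x| 2]
    norm_num
  set f : Ω × ℝ → ENNReal := fun z => ENNReal.ofReal
      |(Real.exp (-(z.2 * p z.1 / 2)) - Real.exp (-(z.2 * q z.1 / 2))) / z.2| with hfdef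
  set g : Ω × ℝ → ENNReal := fun z => ENNReal.ofReal
      |(Real.exp (-(z.2 * q z.1 / 2)) - Real.exp (-(z.2 * r z.1 / 2))) / z.2| with hgdef
  have hfm : Measurable f := by
    have m1 : Measurable fun z : Ω × ℝ => Real.exp (-(z.2 * p z.1 / 2)) :=
      Real.measurable_exp.comp ((measurable_snd.mul (hp.1.comp measurable_fst)).div_const 2).neg
    have m2 : Measurable fun z : Ω × ℝ => Real.exp (-(z.2 * q z.1 / 2)) :=
      Real.measurable_exp.comp ((measurable_snd.mul (hq.1.comp measurable_fst)).div_const 2).neg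
    exact (((m1.sub m2).div measurable_snd).abs).ennreal_ofReal
  have hgm : Measurable g := by
    have m1 : Measurable fun z : Ω × ℝ => Real.exp (-(z.2 * q z.1 / 2)) :=
      Real.measurable_exp.comp ((measurable_snd.mul (hq.1.comp measurable_fst)).div_const 2).neg
    have m2 : Measurable fun z : Ω × ℝ => Real.exp (-(z.2 * r z.1 / 2)) :=
      Real.measurable_exp.comp ((measurable_snd.mul (hr.1.comp measurable_fst)).div_const 2).neg
    exact (((m1.sub m2).div measurable_snd).abs).ennreal_ofReal
  have hWpq_eq : Wpq = ∫⁻ z, f z ^ (2:ℝ) ∂M :=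
    lintegral_congr fun z => sqOfReal _
  have hWqr_eq : Wqr = ∫⁻ z, g z ^ (2:ℝ) ∂M :=
    lintegral_congr fun z => sqOfReal _
  have hmono : Wpr ≤ ∫⁻ z, ((f + g) z) ^ (2:ℝ) ∂M := by
    rw [hWprdef]
    refine lintegral_mono fun z => ?_
    rw [sqOfReal]
    refine ENNReal.rpow_le_rpow ?_ (by norm_num)
    simp only [Pi.add_apply, hfdef, hgdef]
    rw [← ENNReal.ofReal_add (abs_nonneg _) (abs_nonneg _)]
    refine ENNReal.ofReal_le_ofReal ?_
    have e : (Real.exp (-(z.2 * p z.1 / 2)) - Real.exp (-(z.2 * r z.1 / 2))) / z.2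
        = (Real.exp (-(z.2 * p z.1 / 2)) - Real.exp (-(z.2 * q z.1 / 2))) / z.2
          + (Real.exp (-(z.2 * q z.1 / 2)) - Real.exp (-(z.2 * r z.1 / 2))) / z.2 := by
      rw [← add_div]
      congr 1
      ring
    rw [e]
    exact abs_add_le _ _
  have mink := ENNReal.lintegral_Lp_add_le (μ := M) hfm.aemeasurable hgm.aemeasurable
    (by norm_num : (1:ℝ) ≤ 2)
  have keyineq : Wpr ^ (1/2:ℝ) ≤ Wpq ^ (1/2:ℝ) + Wqr ^ (1/2:ℝ) := by
    calc Wpr ^ (1/2:ℝ) ≤ (∫⁻ z, ((f + g) z) ^ (2:ℝ) ∂M) ^ (1/2:ℝ) :=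
          ENNReal.rpow_le_rpow hmono (by norm_num)
      _ ≤ (∫⁻ z, f z ^ (2:ℝ) ∂M) ^ (1/2:ℝ) + (∫⁻ z, g z ^ (2:ℝ) ∂M) ^ (1/2:ℝ) := mink
      _ = Wpq ^ (1/2:ℝ) + Wqr ^ (1/2:ℝ) := by rw [← hWpq_eq, ← hWqr_eq]
  have hfin : Wpq ^ (1/2:ℝ) + Wqr ^ (1/2:ℝ) ≠ ⊤ :=
    ENNReal.add_ne_top.2 ⟨ENNReal.rpow_ne_top_of_nonneg (by norm_num) hWpq_ne,
      ENNReal.rpow_ne_top_of_nonneg (by norm_num) hWqr_ne⟩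
  have hreal := ENNReal.toReal_mono hfin keyineq
  rw [ENNReal.toReal_add (ENNReal.rpow_ne_top_of_nonneg (by norm_num) hWpq_ne)
    (ENNReal.rpow_ne_top_of_nonneg (by norm_num) hWqr_ne),
    ← ENNReal.toReal_rpow, ← ENNReal.toReal_rpow, ← ENNReal.toReal_rpow] at hreal
  have hs : Real.sqrt Wpr.toReal ≤ Real.sqrt Wpq.toReal + Real.sqrt Wqr.toReal := by
    rw [Real.sqrt_eq_rpow, Real.sqrt_eq_rpow, Real.sqrt_eq_rpow]
    exact hreal
  rw [dJS, dJS, dJS, hJpr, hJpq, hJqr,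
    Real.sqrt_mul (by norm_num : (0:ℝ) ≤ 1/2), Real.sqrt_mul (by norm_num : (0:ℝ) ≤ 1/2),
    Real.sqrt_mul (by norm_num : (0:ℝ) ≤ 1/2)]
  calc Real.sqrt (1/2) * Real.sqrt Wpr.toReal
      ≤ Real.sqrt (1/2) * (Real.sqrt Wpq.toReal + Real.sqrt Wqr.toReal) :=
        mul_le_mul_of_nonneg_left hs (Real.sqrt_nonneg _)
    _ = Real.sqrt (1/2) * Real.sqrt Wpq.toReal + Real.sqrt (1/2) * Real.sqrt Wqr.toReal := by
        ring
end

section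
/- (Theorem 1, upper bound.) Let p_t, p_s and p_1, …, p_N (N ≥ 1) be probability densities on a measure space (Ω, μ). Assume that max_{1≤i≤N} d_JS(p_i, p_s) ≥ d_JS(p_u, p_v) for all u, v ∈ {1, …, N}. Then TV(p_t, p_s) ≤ (1/N)·Σ_{i=1}^N TV(p_i, p_s) + √2 · min_{1≤i≤N} d_JS(p_i, p_t) + √2 · max_{1≤i≤N} d_JS(p_i, p_s). In the paper's terminology: the Discriminant Risk on the target domain is bounded by the average Discriminant Risk over the source subsets, plus √2 times the smallest Jensen–Shannon distance from a source subset prediction distribution to the target prediction distribution, plus √2 times the largest Jensen–Shannon distance from a source subset prediction distribution to the overall source prediction distribution. -/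
open MeasureTheory

open Real

section Aux

lemma log_ineq (t : ℝ) (ht : t ∈ Set.Ico (0:ℝ) 1) :
    2*t ≤ Real.log (1+t) - Real.log (1-t) := by
  set F : ℝ → ℝ := fun x => Real.log (1+x) - Real.log (1-x) - 2*x with hF
  have hder : ∀ x ∈ Set.Ioo (0:ℝ) 1, HasDerivAt F (1/(1+x) - (-1)/(1-x) - 2) x := by
    intro x hx
    have hx1 : (1:ℝ)+x ≠ 0 := by nlinarith [hx.1, hx.2]
    have hx2 : (1:ℝ)-x ≠ 0 := by nlinarith [hx.1, hx.2]
    have h1 : HasDerivAt (fun y : ℝ => 1+y) 1 x := by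
      simpa using (hasDerivAt_id x).const_add (1:ℝ)
    have h2 : HasDerivAt (fun y : ℝ => 1-y) (-1) x := by
      exact HasDerivAt.const_sub 1 (hasDerivAt_id x)
    have h3 : HasDerivAt (fun y : ℝ => 2*y) 2 x := by
      simpa using (hasDerivAt_id x).const_mul (2:ℝ)
    exact ((h1.log hx1).sub (h2.log hx2)).sub h3
  have hmono : MonotoneOn F (Set.Ico (0:ℝ) 1) := by
    apply monotoneOn_of_deriv_nonneg (convex_Ico 0 1)
    · apply ContinuousOn.sub
      apply ContinuousOn.sub
      · exact (ContinuousOn.log (by fun_prop) (fun x hx => by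
          have := hx.1; have := hx.2; simp only [Set.mem_Ico] at *; nlinarith))
      · exact (ContinuousOn.log (by fun_prop) (fun x hx => by
          have := hx.1; have := hx.2; simp only [Set.mem_Ico] at *; nlinarith))
      · fun_prop
    · intro x hx
      rw [interior_Ico] at hx
      exact (hder x hx).differentiableAt.differentiableWithinAt
    · intro x hx
      rw [interior_Ico] at hx
      rw [(hder x hx).deriv]
      have hx1 : (0:ℝ) < 1+x := by nlinarith [hx.1, hx.2]
      have hx2 : (0:ℝ) < 1-x := by nlinarith [hx.1, hx.2]
      have : 1/(1+x) - (-1)/(1-x) - 2 = 2*x^2/((1+x)*(1-x)) := by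
        field_simp; ring
      rw [this]; positivity
  have h0 : F 0 ≤ F t := hmono (by simp) ht ht.1
  have : F 0 = 0 := by simp [hF]
  simp only [hF] at h0 this
  linarith

lemma g_ineq (t : ℝ) (ht : t ∈ Set.Icc (0:ℝ) 1) :
    t^2 ≤ (1+t)*Real.log (1+t) + (1-t)*Real.log (1-t) := by
  rcases eq_or_lt_of_le ht.2 with h1 | h1
  · subst h1
    simp only [sub_self, zero_mul, add_zero]
    have := Real.log_two_gt_d9
    norm_num
    nlinarith [Real.log_two_gt_d9]
  set G : ℝ → ℝ := fun x => (1+x)*Real.log (1+x) + (1-x)*Real.log (1-x) - x^2 with hG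
  have hder : ∀ x ∈ Set.Ioo (0:ℝ) 1, HasDerivAt G
      (1*Real.log (1+x) + (1+x)*(1/(1+x)) + ((-1)*Real.log (1-x) + (1-x)*((-1)/(1-x))) - 2*x) x := by
    intro x hx
    have hx1 : (1:ℝ)+x ≠ 0 := by nlinarith [hx.1, hx.2]
    have hx2 : (1:ℝ)-x ≠ 0 := by nlinarith [hx.1, hx.2]
    have h1 : HasDerivAt (fun y : ℝ => 1+y) 1 x := by
      simpa using (hasDerivAt_id x).const_add (1:ℝ)
    have h2 : HasDerivAt (fun y : ℝ => 1-y) (-1) x := by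
      exact HasDerivAt.const_sub 1 (hasDerivAt_id x)
    have hsq : HasDerivAt (fun y : ℝ => y^2) (2*x) x := by
      simpa using (hasDerivAt_pow 2 x)
    exact ((h1.mul (h1.log hx1)).add (h2.mul (h2.log hx2))).sub hsq
  have hmono : MonotoneOn G (Set.Ico (0:ℝ) 1) := by
    apply monotoneOn_of_deriv_nonneg (convex_Ico 0 1)
    · apply ContinuousOn.sub
      apply ContinuousOn.add
      · exact (by fun_prop : ContinuousOn (fun x : ℝ => 1+x) _).mul
          (ContinuousOn.log (by fun_prop) (fun x hx => by
            simp only [Set.mem_Ico] at hx; nlinarith [hx.1, hx.2]))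
      · exact (by fun_prop : ContinuousOn (fun x : ℝ => 1-x) _).mul
          (ContinuousOn.log (by fun_prop) (fun x hx => by
            simp only [Set.mem_Ico] at hx; nlinarith [hx.1, hx.2]))
      · fun_prop
    · intro x hx
      rw [interior_Ico] at hx
      exact (hder x hx).differentiableAt.differentiableWithinAt
    · intro x hx
      rw [interior_Ico] at hx
      rw [(hder x hx).deriv]
      have hx1 : (0:ℝ) < 1+x := by nlinarith [hx.1, hx.2]
      have hx2 : (0:ℝ) < 1-x := by nlinarith [hx.1, hx.2]
      have e : 1*Real.log (1+x) + (1+x)*(1/(1+x)) + ((-1)*Real.log (1-x) + (1-x)*((-1)/(1-x))) - 2*x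
          = Real.log (1+x) - Real.log (1-x) - 2*x := by
        field_simp; ring
      rw [e]
      have := log_ineq x ⟨hx.1.le, hx.2⟩
      linarith
  have h0 : G 0 ≤ G t := hmono (by simp) ⟨ht.1, h1⟩ ht.1
  have hG0 : G 0 = 0 := by simp [hG]
  simp only [hG] at h0 hG0
  linarith

lemma key_st (s t : ℝ) (hs : 0 ≤ s) (ht : t ∈ Set.Icc (0:ℝ) 1) :
    s*t^2/2 ≤ (s*(1+t)/2) * Real.log (1+t) + (s*(1-t)/2)*Real.log (1-t) := by
  have hg := mul_le_mul_of_nonneg_left (g_ineq t ht) hs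
  have e : (s*(1+t)/2) * Real.log (1+t) + (s*(1-t)/2)*Real.log (1-t)
      = (s*((1+t)*Real.log (1+t) + (1-t)*Real.log (1-t)))/2 := by ring
  rw [e]; linarith

lemma key_aux_s5 (a b : ℝ) (ha : 0 ≤ a) (hb : 0 ≤ b) (hba : b ≤ a) :
    (a-b)^2/(2*(a+b)) ≤ a * Real.log (a/((a+b)/2)) + b * Real.log (b/((a+b)/2)) := by
  rcases eq_or_lt_of_le (by linarith : (0:ℝ) ≤ a+b) with hs | hs
  · have ha0 : a = 0 := by linarith
    have hb0 : b = 0 := by linarith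
    simp [ha0, hb0]
  set t : ℝ := (a-b)/(a+b) with htdef
  have hsne : a+b ≠ 0 := ne_of_gt hs
  have ht : t ∈ Set.Icc (0:ℝ) 1 := by
    constructor
    · apply div_nonneg (by linarith) (by linarith)
    · rw [div_le_one hs]; linarith
  have e1 : a/((a+b)/2) = 1 + t := by rw [htdef]; field_simp; ring
  have e2 : b/((a+b)/2) = 1 - t := by rw [htdef]; field_simp; ring
  have e3 : a * Real.log (1+t) = ((a+b)*(1+t)/2) * Real.log (1+t) := by
    congr 1; rw [htdef]; field_simp; ring
  have e4 : b * Real.log (1-t) = ((a+b)*(1-t)/2) * Real.log (1-t) := by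
    congr 1; rw [htdef]; field_simp; ring
  have e5 : (a-b)^2/(2*(a+b)) = (a+b)*t^2/2 := by rw [htdef]; field_simp
  rw [e1, e2, e5, e3, e4]
  exact key_st (a+b) t hs.le ht

lemma key_pointwise (a b : ℝ) (ha : 0 ≤ a) (hb : 0 ≤ b) :
    (a-b)^2/(2*(a+b)) ≤ a * Real.log (a/((a+b)/2)) + b * Real.log (b/((a+b)/2)) := by
  rcases le_total b a with h | h
  · exact key_aux_s5 a b ha hb h
  · have h2 := key_aux_s5 b a hb ha h
    rw [show (b-a)^2 = (a-b)^2 by ring, show b+a = a+b by ring] at h2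
    linarith

-- pointwise AM-GM
lemma amgm_pointwise (a b c : ℝ) (ha : 0 ≤ a) (hb : 0 ≤ b) (hc : 0 < c) :
    |a - b| ≤ (c * ((a-b)^2/(2*(a+b))) + (2/c)*(a+b))/2 := by
  rcases eq_or_lt_of_le (by linarith : (0:ℝ) ≤ a+b) with hs | hs
  · have ha0 : a = 0 := by linarith
    have hb0 : b = 0 := by linarith
    simp [ha0, hb0]
  rw [le_div_iff₀ (by norm_num : (0:ℝ) < 2)]
  have e : c * ((a-b)^2/(2*(a+b))) + (2/c)*(a+b)
      = (c^2*(a-b)^2 + 4*(a+b)^2)/(2*(a+b)*c) := by field_simp; ring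
  rw [e, le_div_iff₀ (by positivity)]
  have h1 : |a-b|^2 = (a-b)^2 := sq_abs _
  nlinarith [sq_nonneg (c*|a-b| - 2*(a+b)), abs_nonneg (a-b)]

-- bounds on a single KL-to-midpoint integrand
lemma kl_bounds (a b : ℝ) (ha : 0 ≤ a) (hb : 0 ≤ b) :
    (a-b)/2 ≤ a * Real.log (a/((a+b)/2)) ∧ a * Real.log (a/((a+b)/2)) ≤ a * Real.log 2 := by
  rcases eq_or_lt_of_le ha with h0 | h0
  · simp [← h0]; linarith
  · have hm : 0 < (a+b)/2 := by linarith
    have hu : 0 < a/((a+b)/2) := by positivity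
    constructor
    · have h1 := Real.one_sub_inv_le_log_of_pos hu
      have h2 : (a/((a+b)/2))⁻¹ = ((a+b)/2)/a := by
        rw [inv_div]
      rw [h2] at h1
      have h3 := mul_le_mul_of_nonneg_left h1 ha
      have h4 : a * (1 - ((a+b)/2)/a) = (a-b)/2 := by field_simp; ring
      linarith [h4 ▸ h3]
    · have h1 : a/((a+b)/2) ≤ 2 := by
        rw [div_le_iff₀ hm]; linarith
      have h2 : Real.log (a/((a+b)/2)) ≤ Real.log 2 := by
        rw [Real.log_le_log_iff hu (by norm_num)]; exact h1
      exact mul_le_mul_of_nonneg_left h2 ha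

variable {Ω : Type*} [MeasurableSpace Ω] {μ : Measure Ω}

lemma IsProbDensity.int {p : Ω → ℝ} (hp : IsProbDensity μ p) : Integrable p μ := by
  obtain ⟨hm, hnn, hint⟩ := hp
  by_contra h
  rw [integral_undef h] at hint
  norm_num at hint

lemma tv_nonneg (p q : Ω → ℝ) : 0 ≤ TVdist μ p q :=
  mul_nonneg (by norm_num) (integral_nonneg fun x => abs_nonneg _)

lemma tv_symm (p q : Ω → ℝ) : TVdist μ p q = TVdist μ q p := by
  unfold TVdist
  congr 1
  exact integral_congr_ae (Filter.Eventually.of_forall fun x => abs_sub_comm _ _)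

lemma tv_triangle {p q r : Ω → ℝ} (hp : IsProbDensity μ p) (hq : IsProbDensity μ q)
    (hr : IsProbDensity μ r) : TVdist μ p r ≤ TVdist μ p q + TVdist μ q r := by
  unfold TVdist
  rw [← mul_add]
  apply mul_le_mul_of_nonneg_left _ (by norm_num : (0:ℝ) ≤ 1/2)
  have i1 : Integrable (fun x => |p x - q x|) μ := (hp.int.sub hq.int).abs
  have i2 : Integrable (fun x => |q x - r x|) μ := (hq.int.sub hr.int).abs
  have i3 : Integrable (fun x => |p x - r x|) μ := (hp.int.sub hr.int).abs
  rw [← integral_add i1 i2]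
  apply integral_mono i3 (i1.add i2)
  intro x
  simpa using abs_sub_le (p x) (q x) (r x)

lemma tv_le_dJS {p q : Ω → ℝ} (hp : IsProbDensity μ p) (hq : IsProbDensity μ q) :
    TVdist μ p q ≤ Real.sqrt 2 * dJS μ p q := by
  obtain ⟨pm, pnn, pint⟩ := hp
  obtain ⟨qm, qnn, qint⟩ := hq
  have pInt : Integrable p μ := IsProbDensity.int ⟨pm, pnn, pint⟩
  have qInt : Integrable q μ := IsProbDensity.int ⟨qm, qnn, qint⟩
  set φ : Ω → ℝ := fun x => (p x - q x)^2/(2*(p x + q x)) with hφ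
  set f1 : Ω → ℝ := fun x => p x * Real.log (p x / ((p x + q x)/2)) with hf1
  set f2 : Ω → ℝ := fun x => q x * Real.log (q x / ((p x + q x)/2)) with hf2
  have mφ : Measurable φ := ((pm.sub qm).pow_const 2).div (measurable_const.mul (pm.add qm))
  have mf1 : Measurable f1 := pm.mul (Real.measurable_log.comp (pm.div ((pm.add qm).div_const 2)))
  have mf2 : Measurable f2 := qm.mul (Real.measurable_log.comp (qm.div ((pm.add qm).div_const 2)))
  have hb1 : ∀ x, (p x - q x)/2 ≤ f1 x ∧ f1 x ≤ p x * Real.log 2 :=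
    fun x => kl_bounds (p x) (q x) (pnn x) (qnn x)
  have hb2 : ∀ x, (q x - p x)/2 ≤ f2 x ∧ f2 x ≤ q x * Real.log 2 := by
    intro x
    have := kl_bounds (q x) (p x) (qnn x) (pnn x)
    rwa [add_comm (q x) (p x)] at this
  have log2nn : (0:ℝ) ≤ Real.log 2 := Real.log_nonneg (by norm_num)
  have gInt : Integrable (fun x => (p x + q x) * Real.log 2 + (p x + q x)/2) μ :=
    ((pInt.add qInt).mul_const _).add ((pInt.add qInt).div_const 2)
  have f1Int : Integrable f1 μ := by
    apply Integrable.mono' gInt mf1.aestronglyMeasurable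
    filter_upwards with x
    rw [Real.norm_eq_abs, abs_le]
    constructor
    · have h1 := (hb1 x).1
      nlinarith [pnn x, qnn x, mul_nonneg (qnn x) log2nn, mul_nonneg (pnn x) log2nn]
    · have h2 := (hb1 x).2
      nlinarith [pnn x, qnn x, mul_nonneg (qnn x) log2nn]
  have f2Int : Integrable f2 μ := by
    apply Integrable.mono' gInt mf2.aestronglyMeasurable
    filter_upwards with x
    rw [Real.norm_eq_abs, abs_le]
    constructor
    · have h1 := (hb2 x).1
      nlinarith [pnn x, qnn x, mul_nonneg (qnn x) log2nn, mul_nonneg (pnn x) log2nn]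
    · have h2 := (hb2 x).2
      nlinarith [pnn x, qnn x, mul_nonneg (pnn x) log2nn]
  have φnn : ∀ x, 0 ≤ φ x := fun x => div_nonneg (sq_nonneg _) (by nlinarith [pnn x, qnn x])
  have hψφ : ∀ x, φ x ≤ f1 x + f2 x := by
    intro x
    have := key_pointwise (p x) (q x) (pnn x) (qnn x)
    simpa [hφ, hf1, hf2] using this
  have φInt : Integrable φ μ := by
    apply Integrable.mono' ((pInt.add qInt).mul_const (Real.log 2)) mφ.aestronglyMeasurable
    filter_upwards with x
    rw [Real.norm_eq_abs, abs_of_nonneg (φnn x)]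
    calc φ x ≤ f1 x + f2 x := hψφ x
    _ ≤ (p x + q x) * Real.log 2 := by
        have := (hb1 x).2; have := (hb2 x).2; nlinarith
  have hIψ : ∫ x, (f1 x + f2 x) ∂μ = 2 * JSdiv μ p q := by
    rw [integral_add f1Int f2Int]
    simp only [JSdiv, KLdiv]
    ring
  have hintφ : ∫ x, φ x ∂μ ≤ 2 * JSdiv μ p q := by
    rw [← hIψ]
    exact integral_mono φInt (f1Int.add f2Int) hψφ
  have hφint0 : 0 ≤ ∫ x, φ x ∂μ := integral_nonneg φnn
  have hJS : 0 ≤ JSdiv μ p q := by linarith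
  have hbound : ∀ c : ℝ, 0 < c → TVdist μ p q ≤ c * JSdiv μ p q / 2 + 1/c := by
    intro c hc
    have hpw : ∀ x, |p x - q x| ≤ (c * φ x + (2/c)*(p x + q x))/2 :=
      fun x => amgm_pointwise (p x) (q x) c (pnn x) (qnn x) hc
    have BInt : Integrable (fun x => (c * φ x + (2/c)*(p x + q x))/2) μ :=
      ((φInt.const_mul c).add ((pInt.add qInt).const_mul (2/c))).div_const 2
    have h1 : ∫ x, |p x - q x| ∂μ ≤ ∫ x, (c * φ x + (2/c)*(p x + q x))/2 ∂μ :=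
      integral_mono (pInt.sub qInt).abs BInt hpw
    have h2 : ∫ x, (c * φ x + (2/c)*(p x + q x))/2 ∂μ
        = (c * ∫ x, φ x ∂μ + (2/c)*2)/2 := by
      have i1 : Integrable (fun x => c * φ x) μ := φInt.const_mul c
      have i2 : Integrable (fun x => (2/c) * (p x + q x)) μ := (pInt.add qInt).const_mul (2/c)
      rw [integral_div, integral_add i1 i2, MeasureTheory.integral_const_mul, MeasureTheory.integral_const_mul,
        integral_add pInt qInt, pint, qint]
      norm_num
    unfold TVdist
    rw [h2] at h1
    have h3 : c * ∫ x, φ x ∂μ ≤ c * (2 * JSdiv μ p q) :=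
      mul_le_mul_of_nonneg_left hintφ hc.le
    have h4 : (2:ℝ)/c * 2 = 4/c := by ring
    calc (1:ℝ)/2 * ∫ x, |p x - q x| ∂μ ≤ (1/2) * ((c * (2 * JSdiv μ p q) + (2/c)*2)/2) := by
          apply mul_le_mul_of_nonneg_left _ (by norm_num : (0:ℝ) ≤ 1/2)
          linarith
    _ = c * JSdiv μ p q / 2 + 1/c := by field_simp
  rcases eq_or_lt_of_le hJS with hJ0 | hJ0
  · have hd : dJS μ p q = 0 := by rw [dJS, ← hJ0, Real.sqrt_zero]
    rw [hd, mul_zero]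
    by_contra h
    push_neg at h
    have hTV : 0 < TVdist μ p q := h
    have := hbound (2 / TVdist μ p q) (by positivity)
    rw [← hJ0] at this
    rw [one_div_div] at this
    simp only [mul_zero, zero_div, zero_add] at this
    linarith
  · set c : ℝ := Real.sqrt 2 / Real.sqrt (JSdiv μ p q) with hcdef
    have hs2 : Real.sqrt 2 ^ 2 = 2 := Real.sq_sqrt (by norm_num)
    have hsJ : Real.sqrt (JSdiv μ p q) ^ 2 = JSdiv μ p q := Real.sq_sqrt hJS
    have hs2p : 0 < Real.sqrt 2 := Real.sqrt_pos.mpr (by norm_num)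
    have hsJp : 0 < Real.sqrt (JSdiv μ p q) := Real.sqrt_pos.mpr hJ0
    have hc : 0 < c := by positivity
    have := hbound c hc
    have he : c * JSdiv μ p q / 2 + 1/c = Real.sqrt 2 * Real.sqrt (JSdiv μ p q) := by
      rw [hcdef]
      field_simp
      nlinarith [hs2, hsJ, hs2p, hsJp]
    rw [he] at this
    exact this

end Aux

/-- Theorem 1 (upper bound): the Discriminant Risk on the target domain is bounded by the
average Discriminant Risk over the source subsets, plus √2 times the smallest JS distance
from a source subset to the target, plus √2 times the largest JS distance from a source
subset to the overall source distribution. -/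
theorem discriminant_risk_upper_bound {Ω : Type*} [MeasurableSpace Ω]
    (μ : Measure Ω) [SigmaFinite μ]
    (N : ℕ) [NeZero N] (pt ps : Ω → ℝ) (p : Fin N → Ω → ℝ)
    (hpt : IsProbDensity μ pt) (hps : IsProbDensity μ ps)
    (hp : ∀ i, IsProbDensity μ (p i))
    (hmax : ∀ u v : Fin N,
      dJS μ (p u) (p v) ≤ Finset.univ.sup' Finset.univ_nonempty (fun i => dJS μ (p i) ps)) :
    TVdist μ pt ps ≤
      (1 / N) * ∑ i, TVdist μ (p i) ps
        + Real.sqrt 2 * Finset.univ.inf' Finset.univ_nonempty (fun i => dJS μ (p i) pt)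
        + Real.sqrt 2 * Finset.univ.sup' Finset.univ_nonempty (fun i => dJS μ (p i) ps) := by
  set inf := Finset.univ.inf' Finset.univ_nonempty (fun i => dJS μ (p i) pt) with hinf
  set sup := Finset.univ.sup' Finset.univ_nonempty (fun i => dJS μ (p i) ps) with hsup
  have hs2 : (0:ℝ) ≤ Real.sqrt 2 := Real.sqrt_nonneg 2
  obtain ⟨j, _, hjeq⟩ := Finset.exists_mem_eq_inf' (Finset.univ_nonempty (α := Fin N))
    (fun i => dJS μ (p i) pt)
  have key : ∀ i : Fin N, TVdist μ pt ps ≤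
      Real.sqrt 2 * inf + Real.sqrt 2 * sup + TVdist μ (p i) ps := by
    intro i
    have t1 : TVdist μ pt ps ≤ TVdist μ pt (p j) + TVdist μ (p j) ps :=
      tv_triangle hpt (hp j) hps
    have t2 : TVdist μ (p j) ps ≤ TVdist μ (p j) (p i) + TVdist μ (p i) ps :=
      tv_triangle (hp j) (hp i) hps
    have b1 : TVdist μ pt (p j) ≤ Real.sqrt 2 * inf := by
      rw [tv_symm]
      calc TVdist μ (p j) pt ≤ Real.sqrt 2 * dJS μ (p j) pt := tv_le_dJS (hp j) hpt
      _ = Real.sqrt 2 * inf := by rw [hinf, hjeq]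
    have b2 : TVdist μ (p j) (p i) ≤ Real.sqrt 2 * sup := by
      calc TVdist μ (p j) (p i) ≤ Real.sqrt 2 * dJS μ (p j) (p i) := tv_le_dJS (hp j) (hp i)
      _ ≤ Real.sqrt 2 * sup := mul_le_mul_of_nonneg_left (hmax j i) hs2
    linarith
  have hN : (0:ℝ) < (N:ℝ) := by
    exact_mod_cast Nat.pos_of_ne_zero (NeZero.ne N)
  have h2 : (N:ℝ) * TVdist μ pt ps ≤
      (N:ℝ) * (Real.sqrt 2 * inf + Real.sqrt 2 * sup) + ∑ i, TVdist μ (p i) ps := by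
    have e1 : (N:ℝ) * TVdist μ pt ps = ∑ _i : Fin N, TVdist μ pt ps := by
      rw [Finset.sum_const, Finset.card_univ, Fintype.card_fin, nsmul_eq_mul]
    rw [e1]
    calc ∑ _i : Fin N, TVdist μ pt ps
        ≤ ∑ i, (Real.sqrt 2 * inf + Real.sqrt 2 * sup + TVdist μ (p i) ps) :=
          Finset.sum_le_sum (fun i _ => key i)
    _ = (N:ℝ) * (Real.sqrt 2 * inf + Real.sqrt 2 * sup) + ∑ i, TVdist μ (p i) ps := by
          rw [Finset.sum_add_distrib, Finset.sum_const, Finset.card_univ, Fintype.card_fin,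
            nsmul_eq_mul]
  have h3 : TVdist μ pt ps ≤
      ((N:ℝ) * (Real.sqrt 2 * inf + Real.sqrt 2 * sup) + ∑ i, TVdist μ (p i) ps) / N := by
    rw [le_div_iff₀ hN]
    linarith
  have h4 : ((N:ℝ) * (Real.sqrt 2 * inf + Real.sqrt 2 * sup) + ∑ i, TVdist μ (p i) ps) / N
      = (1 / N) * ∑ i, TVdist μ (p i) ps + Real.sqrt 2 * inf + Real.sqrt 2 * sup := by
    field_simp
    ring
  linarith
end
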